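/- For natural numbers j ≤ k, m < r (more precisely m ≤ r - 1 with b-quantities defined), the inequality b_{r,m} ≥ b_{r,m+1} holds if and only if r ≤ j·(k+1+m-j)/(k+1), where b_{r,m} = [r!/(r-m)!]·[(k+m-j)!/(k+m-j-r)!]·[(j-m)!/j!]·[(n-j-r)!/(n-j)!]. -/

import Mathlib

open Nat


lemma key_aux (A B C D E J F G a c d e : ℚ)
    (hApos : 0 < A) (hBpos : 0 < B) (hCpos : 0 < C) (hDpos : 0 < D)
    (hEpos : 0 < E) (hJpos : 0 < J) (hFpos : 0 < F) (hGpos : 0 < G)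
    (hapos : 0 < a) (hcpos : 0 < c) (hdpos : 0 < d) (hepos : 0 < e) :
    (A / B * (c * C / (d * D)) * (E / J) * (F / G)
      ≤ A / (a * B) * (C / D) * (e * E / J) * (F / G)) ↔ a * c ≤ e * d := by
  have hP : (0:ℚ) < A * B * C * D * E * F * J * G := by positivity
  rw [_root_.div_mul_div_comm, _root_.div_mul_div_comm, _root_.div_mul_div_comm, _root_.div_mul_div_comm,
    _root_.div_mul_div_comm, _root_.div_mul_div_comm,
    div_le_div_iff₀ (by positivity) (by positivity)]
  constructor
  · intro h
    have h2 : A * (c * C) * E * F * (a * B * D * J * G)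
        = (a * c) * (A * B * C * D * E * F * J * G) := by ring
    have h3 : A * C * (e * E) * F * (B * (d * D) * J * G)
        = (e * d) * (A * B * C * D * E * F * J * G) := by ring
    rw [h2, h3] at h
    exact le_of_mul_le_mul_right h hP
  · intro h
    nlinarith [hP, mul_le_mul_of_nonneg_right h (le_of_lt hP)]

set_option maxHeartbeats 1000000 in
theorem b_mono_in_m_iff (n j k r m : ℕ) (hjk : j ≤ k) (hkn : k ≤ n)
    (hmr : m + 1 ≤ r) (hrD : r ≤ min j (n - j)) (hrk : r ≤ k + m - j) (hmj : m + 1 ≤ j) :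
    (((r ! : ℚ) / ((r - (m + 1))! : ℚ))
          * (((k + (m + 1) - j)! : ℚ) / ((k + (m + 1) - j - r)! : ℚ))
          * (((j - (m + 1))! : ℚ) / (j ! : ℚ))
          * (((n - j - r)! : ℚ) / ((n - j)! : ℚ))
        ≤ ((r ! : ℚ) / ((r - m)! : ℚ))
          * (((k + m - j)! : ℚ) / ((k + m - j - r)! : ℚ))
          * (((j - m)! : ℚ) / (j ! : ℚ))
          * (((n - j - r)! : ℚ) / ((n - j)! : ℚ)))
      ↔ r * (k + 1) ≤ j * (k + 1 + m - j) := by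
  have hrj : r ≤ j := le_trans hrD (min_le_left _ _)
  have hkmj : j ≤ k + m := le_trans hjk (Nat.le_add_right _ _)
  have e2 : k + (m+1) - j - r = (k + m - j - r) + 1 := by omega
  have e1 : k + (m+1) - j = (k + m - j) + 1 := by omega
  have e3 : (r - m) = (r - (m+1)) + 1 := by omega
  have e4 : (j - m) = (j - (m+1)) + 1 := by omega
  rw [e2, e1, e3, e4, Nat.factorial_succ, Nat.factorial_succ, Nat.factorial_succ,
    Nat.factorial_succ]
  push_cast
  set A := (r ! : ℚ) with hA
  set B := ((r - (m+1))! : ℚ) with hB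
  set C := ((k + m - j)! : ℚ) with hC
  set D := ((k + m - j - r)! : ℚ) with hD
  set E := ((j - (m+1))! : ℚ) with hE
  set J := (j ! : ℚ) with hJ
  set F := ((n - j - r)! : ℚ) with hF
  set G := ((n - j)! : ℚ) with hG
  set a := ((r - (m+1) : ℕ) : ℚ) + 1 with ha
  set c := ((k + m - j : ℕ) : ℚ) + 1 with hc
  set d := ((k + m - j - r : ℕ) : ℚ) + 1 with hd
  set e := ((j - (m+1) : ℕ) : ℚ) + 1 with he
  have hApos : 0 < A := by rw [hA]; exact_mod_cast Nat.factorial_pos _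
  have hBpos : 0 < B := by rw [hB]; exact_mod_cast Nat.factorial_pos _
  have hCpos : 0 < C := by rw [hC]; exact_mod_cast Nat.factorial_pos _
  have hDpos : 0 < D := by rw [hD]; exact_mod_cast Nat.factorial_pos _
  have hEpos : 0 < E := by rw [hE]; exact_mod_cast Nat.factorial_pos _
  have hJpos : 0 < J := by rw [hJ]; exact_mod_cast Nat.factorial_pos _
  have hFpos : 0 < F := by rw [hF]; exact_mod_cast Nat.factorial_pos _
  have hGpos : 0 < G := by rw [hG]; exact_mod_cast Nat.factorial_pos _
  have hapos : 0 < a := by rw [ha]; positivity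
  have hcpos : 0 < c := by rw [hc]; positivity
  have hdpos : 0 < d := by rw [hd]; positivity
  have hepos : 0 < e := by rw [he]; positivity
  have hP : (0:ℚ) < A * B * C * D * E * F * J * G := by positivity
  have key := key_aux A B C D E J F G a c d e hApos hBpos hCpos hDpos hEpos hJpos
    hFpos hGpos hapos hcpos hdpos hepos
  rw [key]
  rw [ha, hc, hd, he]
  rw [show ((r - (m+1) : ℕ) : ℚ) + 1 = ((r - m : ℕ) : ℚ) by push_cast [e3]; ring,
    show ((k + m - j : ℕ) : ℚ) + 1 = ((k + m - j + 1 : ℕ) : ℚ) by push_cast; ring,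
    show ((k + m - j - r : ℕ) : ℚ) + 1 = ((k + m - j - r + 1 : ℕ) : ℚ) by push_cast; ring,
    show ((j - (m+1) : ℕ) : ℚ) + 1 = ((j - m : ℕ) : ℚ) by push_cast [e4]; ring,
    ← Nat.cast_mul, ← Nat.cast_mul, Nat.cast_le]
  zify [show m ≤ r by omega, show m ≤ j by omega, show r ≤ k + m - j from hrk,
    show j ≤ k + 1 + m by omega, hkmj]
  have id1 : (j:ℤ) * ((k:ℤ) + 1 + m - j) - (r:ℤ) * ((k:ℤ) + 1)
      = ((j:ℤ) - m) * ((k:ℤ) + m - j - r + 1) - ((r:ℤ) - m) * ((k:ℤ) + m - j + 1) := by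
    ring
  constructor <;> intro h <;> nlinarith [id1]
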